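/- Let f ∈ ℝ[x_0,...,x_n] be a homogeneous polynomial of even degree which is strictly positive on ℝ^{n+1} \ {0}. Then there exists N ∈ ℕ such that (x_0^2 + ... + x_n^2)^N · f is a sum of squares of polynomials. -/
import Mathlib

open MvPolynomial

/-- A sum of squares of polynomials. -/
def IsSOS {σ : Type*} (p : MvPolynomial σ ℝ) : Prop :=
  ∃ (k : ℕ) (q : Fin k → MvPolynomial σ ℝ), p = ∑ i, (q i) ^ 2


variable {σ : Type*}

lemma isSOS_fintype_sum {ι : Type*} [Fintype ι] (g : ι → MvPolynomial σ ℝ) :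
    IsSOS (∑ i, (g i) ^ 2) := by
  refine ⟨Fintype.card ι, fun j => g ((Fintype.equivFin ι).symm j), ?_⟩
  rw [← Equiv.sum_comp (Fintype.equivFin ι).symm (fun i => (g i)^2)]

lemma IsSOS.add {p q : MvPolynomial σ ℝ} (hp : IsSOS p) (hq : IsSOS q) : IsSOS (p + q) := by
  obtain ⟨k, a, rfl⟩ := hp
  obtain ⟨l, b, rfl⟩ := hq
  have := isSOS_fintype_sum (ι := Fin k ⊕ Fin l) (Sum.elim a b)
  rwa [Fintype.sum_sum_type] at this

lemma IsSOS.mul {p q : MvPolynomial σ ℝ} (hp : IsSOS p) (hq : IsSOS q) : IsSOS (p * q) := by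
  obtain ⟨k, a, rfl⟩ := hp
  obtain ⟨l, b, rfl⟩ := hq
  have := isSOS_fintype_sum (ι := Fin k × Fin l) (fun ij => a ij.1 * b ij.2)
  rw [Finset.sum_mul_sum]
  rw [Fintype.sum_prod_type] at this
  simpa [mul_pow] using this

lemma isSOS_sq (p : MvPolynomial σ ℝ) : IsSOS (p ^ 2) := by
  have := isSOS_fintype_sum (ι := Fin 1) (fun _ => p)
  simpa using this

lemma isSOS_zero : IsSOS (0 : MvPolynomial σ ℝ) :=
  ⟨0, fun i => i.elim0, by simp⟩

lemma isSOS_const {c : ℝ} (hc : 0 ≤ c) : IsSOS (C c : MvPolynomial σ ℝ) := by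
  have := isSOS_sq (C (Real.sqrt c) : MvPolynomial σ ℝ)
  rwa [← map_pow, sq, Real.mul_self_sqrt hc] at this

lemma IsSOS.eval_nonneg {p : MvPolynomial σ ℝ} (hp : IsSOS p) (x : σ → ℝ) :
    0 ≤ eval x p := by
  obtain ⟨k, a, rfl⟩ := hp
  rw [map_sum]
  exact Finset.sum_nonneg fun i _ => by rw [map_pow]; positivity

/-- evaluation of a homogeneous polynomial at a rescaled point. -/
lemma eval_homog_smul {g : MvPolynomial σ ℝ} {k : ℕ} (hg : g.IsHomogeneous k)
    (c : ℝ) (v : σ → ℝ) :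
    eval (fun i => c * v i) g = c ^ k * eval v g := by
  classical
  rw [eval_eq, eval_eq, Finset.mul_sum]
  refine Finset.sum_congr rfl fun m hm => ?_
  have hdeg : (∑ i ∈ m.support, m i) = k := by
    simpa [Finsupp.weight_apply, Finsupp.sum, mul_one] using hg (mem_support_iff.mp hm)
  have : (∏ i ∈ m.support, (c * v i) ^ m i)
      = (∏ i ∈ m.support, c ^ m i) * ∏ i ∈ m.support, (v i) ^ m i := by
    rw [← Finset.prod_mul_distrib]
    exact Finset.prod_congr rfl fun i _ => mul_pow _ _ _
  rw [this, Finset.prod_pow_eq_pow_sum, hdeg]; ring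

lemma sum_even_odd (g : ℕ → ℝ) (m : ℕ) :
    (∑ j ∈ Finset.range (m+1), g (2*j)) + (∑ j ∈ Finset.range m, g (2*j+1))
      = ∑ j ∈ Finset.range (2*m+1), g j := by
  induction m with
  | zero => simp
  | succ m ih =>
    have h2 : 2*(m+1)+1 = (2*m+1) + 1 + 1 := by ring
    rw [h2, Finset.sum_range_succ g (2*m+1+1), Finset.sum_range_succ g (2*m+1), ← ih,
      Finset.sum_range_succ (fun j => g (2*j)) (m+1), Finset.sum_range_succ (fun j => g (2*j+1)) m]
    ring_nf


section Pre

variable (n : ℕ)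

local notation "A" => MvPolynomial (Fin (n+1)) ℝ

/-- the sum-of-squares form x₀² + ⋯ + xₙ². -/
noncomputable def tt : MvPolynomial (Fin (n+1)) ℝ := ∑ i, (X i) ^ 2

/-- The preordering of polynomials of the form (SOS) + (t-1)·q. -/
def Pre : Set (MvPolynomial (Fin (n+1)) ℝ) :=
  {a | ∃ s q, IsSOS s ∧ a = s + (tt n - 1) * q}

variable {n}

lemma Pre.of_isSOS {a : A} (h : IsSOS a) : a ∈ Pre n := ⟨a, 0, h, by ring⟩

lemma Pre.sq (a : A) : a ^ 2 ∈ Pre n := Pre.of_isSOS (isSOS_sq a)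

lemma Pre.add {a b : A} (ha : a ∈ Pre n) (hb : b ∈ Pre n) : a + b ∈ Pre n := by
  obtain ⟨s, q, hs, rfl⟩ := ha
  obtain ⟨s', q', hs', rfl⟩ := hb
  exact ⟨s + s', q + q', hs.add hs', by ring⟩

lemma Pre.mul {a b : A} (ha : a ∈ Pre n) (hb : b ∈ Pre n) : a * b ∈ Pre n := by
  obtain ⟨s, q, hs, rfl⟩ := ha
  obtain ⟨s', q', hs', rfl⟩ := hb
  exact ⟨s * s', s * q' + q * s' + (tt n - 1) * q * q', hs.mul hs', by ring⟩

lemma Pre.const {c : ℝ} (hc : 0 ≤ c) : (C c : A) ∈ Pre n := Pre.of_isSOS (isSOS_const hc)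

lemma Pre.smul {c : ℝ} (hc : 0 ≤ c) {a : A} (ha : a ∈ Pre n) : C c * a ∈ Pre n :=
  Pre.mul (Pre.const hc) ha

lemma Pre.zero : (0 : A) ∈ Pre n := Pre.of_isSOS isSOS_zero

lemma Pre.one : (1 : A) ∈ Pre n := by
  have := Pre.sq (n := n) 1; simpa using this

lemma Pre.t_sub_one : (tt n - 1 : A) ∈ Pre n := ⟨0, 1, isSOS_zero, by ring⟩

lemma Pre.one_sub_t : (1 - tt n : A) ∈ Pre n := ⟨0, -1, isSOS_zero, by ring⟩

/-- the evaluation of tt. -/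
lemma eval_tt (x : Fin (n+1) → ℝ) : eval x (tt n) = ∑ i, (x i) ^ 2 := by
  simp [tt]

lemma Pre.eval_nonneg_of_sphere {a : A} (ha : a ∈ Pre n) {x : Fin (n+1) → ℝ}
    (hx : ∑ i, (x i) ^ 2 = 1) : 0 ≤ eval x a := by
  obtain ⟨s, q, hs, rfl⟩ := ha
  have h1 : eval x (tt n) = 1 := by rw [eval_tt, hx]
  have := hs.eval_nonneg x
  simp only [map_add, map_mul, map_sub, map_one, h1, sub_self, zero_mul, add_zero]
  exact this

lemma Pre.proper : (-1 : A) ∉ Pre n := by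
  intro h
  have hx : (∑ i, ((fun j : Fin (n+1) => if j = 0 then (1:ℝ) else 0) i) ^ 2) = 1 := by
    simp [Finset.sum_ite_eq']
  have := Pre.eval_nonneg_of_sphere h hx
  simp at this
  linarith

end Pre

section Arch

variable {n : ℕ}

local notation "A" => MvPolynomial (Fin (n+1)) ℝ

/-- Archimedean bound property w.r.t. a set P. -/
def Bnd (P : Set (MvPolynomial (Fin (n+1)) ℝ)) (a : MvPolynomial (Fin (n+1)) ℝ) : Prop :=
  ∃ l : ℝ, 0 < l ∧ (C l - a) ∈ P ∧ (C l + a) ∈ P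

lemma bnd_const (c : ℝ) : Bnd (Pre n) (C c) := by
  refine ⟨|c| + 1, by positivity, ?_, ?_⟩
  · rw [← map_sub]; exact Pre.const (by cases abs_cases c <;> linarith)
  · rw [← map_add]; exact Pre.const (by cases abs_cases c <;> linarith)

lemma bnd_neg {a : A} (h : Bnd (Pre n) a) : Bnd (Pre n) (-a) := by
  obtain ⟨l, hl, h1, h2⟩ := h
  exact ⟨l, hl, by simpa using h2, by simpa [sub_eq_add_neg] using h1⟩

lemma bnd_add {a b : A} (ha : Bnd (Pre n) a) (hb : Bnd (Pre n) b) : Bnd (Pre n) (a + b) := by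
  obtain ⟨l, hl, h1, h2⟩ := ha
  obtain ⟨m, hm, h3, h4⟩ := hb
  refine ⟨l + m, by positivity, ?_, ?_⟩
  · have := Pre.add h1 h3
    have e : C (l+m) - (a+b) = (C l - a) + (C m - b) := by rw [map_add]; ring
    rwa [e]
  · have := Pre.add h2 h4
    have e : C (l+m) + (a+b) = (C l + a) + (C m + b) := by rw [map_add]; ring
    rwa [e]

lemma bnd_mul {a b : A} (ha : Bnd (Pre n) a) (hb : Bnd (Pre n) b) : Bnd (Pre n) (a * b) := by
  obtain ⟨l, hl, h1, h2⟩ := ha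
  obtain ⟨m, hm, h3, h4⟩ := hb
  have e2 : (C (2⁻¹:ℝ) : A) * 2 = 1 := by
    rw [← map_ofNat (C : ℝ →+* MvPolynomial (Fin (n+1)) ℝ) 2, ← map_mul]; norm_num
  refine ⟨l * m, by positivity, ?_, ?_⟩
  · -- l m - a b = (1/2)((l-a)(m+b) + (l+a)(m-b))
    have h := Pre.smul (c := 2⁻¹) (by norm_num) (Pre.add (Pre.mul h1 h4) (Pre.mul h2 h3))
    have e : C (2⁻¹:ℝ) * ((C l - a) * (C m + b) + (C l + a) * (C m - b)) = C (l*m) - a*b := by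
      rw [map_mul]; linear_combination (C l * C m - a * b) * e2
    rwa [e] at h
  · have h := Pre.smul (c := 2⁻¹) (by norm_num) (Pre.add (Pre.mul h1 h3) (Pre.mul h2 h4))
    have e : C (2⁻¹:ℝ) * ((C l - a) * (C m - b) + (C l + a) * (C m + b)) = C (l*m) + a*b := by
      rw [map_mul]; linear_combination (C l * C m + a * b) * e2
    rwa [e] at h

end Arch

section Arch2

variable {n : ℕ}

lemma isSOS_finset_sum {ι : Type*} (s : Finset ι) (g : ι → MvPolynomial (Fin (n+1)) ℝ) :
    IsSOS (∑ i ∈ s, (g i) ^ 2) := by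
  rw [← Finset.sum_coe_sort s (fun i => g i ^ 2)]
  exact isSOS_fintype_sum _

lemma pre_one_sub_X (i : Fin (n+1)) : (1 - X i : MvPolynomial (Fin (n+1)) ℝ) ∈ Pre n := by
  have e2 : (C (2⁻¹:ℝ) : MvPolynomial (Fin (n+1)) ℝ) * 2 = 1 := by
    rw [← map_ofNat (C : ℝ →+* MvPolynomial (Fin (n+1)) ℝ) 2, ← map_mul]; norm_num
  have hsum : ∑ j ∈ Finset.univ.erase i, (X j : MvPolynomial (Fin (n+1)) ℝ) ^ 2
      = tt n - X i ^ 2 := by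
    rw [tt, Finset.sum_erase_eq_sub (Finset.mem_univ i)]
  have hσ : (C (2⁻¹:ℝ)) * ((1 - X i) ^ 2 + ∑ j ∈ Finset.univ.erase i,
      (X j : MvPolynomial (Fin (n+1)) ℝ) ^ 2) ∈ Pre n :=
    Pre.smul (by norm_num) (Pre.add (Pre.sq _) (Pre.of_isSOS (isSOS_finset_sum _ _)))
  have h := Pre.add hσ (Pre.mul Pre.one_sub_t (Pre.const (by norm_num : (0:ℝ) ≤ 2⁻¹)))
  have e : (C (2⁻¹:ℝ)) * ((1 - X i) ^ 2 + ∑ j ∈ Finset.univ.erase i,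
        (X j : MvPolynomial (Fin (n+1)) ℝ) ^ 2)
      + (1 - tt n) * (C (2⁻¹:ℝ)) = 1 - X i := by
    rw [hsum]; linear_combination (1 - X i) * e2
  rwa [e] at h

lemma pre_one_add_X (i : Fin (n+1)) : (1 + X i : MvPolynomial (Fin (n+1)) ℝ) ∈ Pre n := by
  have e2 : (C (2⁻¹:ℝ) : MvPolynomial (Fin (n+1)) ℝ) * 2 = 1 := by
    rw [← map_ofNat (C : ℝ →+* MvPolynomial (Fin (n+1)) ℝ) 2, ← map_mul]; norm_num
  have hsum : ∑ j ∈ Finset.univ.erase i, (X j : MvPolynomial (Fin (n+1)) ℝ) ^ 2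
      = tt n - X i ^ 2 := by
    rw [tt, Finset.sum_erase_eq_sub (Finset.mem_univ i)]
  have hσ : (C (2⁻¹:ℝ)) * ((1 + X i) ^ 2 + ∑ j ∈ Finset.univ.erase i,
      (X j : MvPolynomial (Fin (n+1)) ℝ) ^ 2) ∈ Pre n :=
    Pre.smul (by norm_num) (Pre.add (Pre.sq _) (Pre.of_isSOS (isSOS_finset_sum _ _)))
  have h := Pre.add hσ (Pre.mul Pre.one_sub_t (Pre.const (by norm_num : (0:ℝ) ≤ 2⁻¹)))
  have e : (C (2⁻¹:ℝ)) * ((1 + X i) ^ 2 + ∑ j ∈ Finset.univ.erase i,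
        (X j : MvPolynomial (Fin (n+1)) ℝ) ^ 2)
      + (1 - tt n) * (C (2⁻¹:ℝ)) = 1 + X i := by
    rw [hsum]; linear_combination (1 + X i) * e2
  rwa [e] at h

lemma bnd_X (i : Fin (n+1)) : Bnd (Pre n) (X i) := by
  refine ⟨1, one_pos, ?_, ?_⟩
  · rw [map_one]; exact pre_one_sub_X i
  · rw [map_one]; exact pre_one_add_X i

lemma bnd_all (a : MvPolynomial (Fin (n+1)) ℝ) : Bnd (Pre n) a := by
  induction a using MvPolynomial.induction_on with
  | C c => exact bnd_const c
  | add p q hp hq => exact bnd_add hp hq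
  | mul_X p i hp => exact bnd_mul hp (bnd_X i)

end Arch2

section Phi

variable {n : ℕ}

/-- quadratic-preordering property. -/
def IsPO (P : Set (MvPolynomial (Fin (n+1)) ℝ)) : Prop :=
  (∀ a, a^2 ∈ P) ∧ (∀ a b, a ∈ P → b ∈ P → a + b ∈ P) ∧ (∀ a b, a ∈ P → b ∈ P → a * b ∈ P)

lemma isPO_Pre : IsPO (Pre n) :=
  ⟨Pre.sq, fun _ _ => Pre.add, fun _ _ => Pre.mul⟩

variable {P : Set (MvPolynomial (Fin (n+1)) ℝ)} (hPO : IsPO P) (hproper : (-1 : MvPolynomial (Fin (n+1)) ℝ) ∉ P)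
  (htot : ∀ a : MvPolynomial (Fin (n+1)) ℝ, a ∈ P ∨ -a ∈ P)
  (harch : ∀ a : MvPolynomial (Fin (n+1)) ℝ, ∃ l : ℝ, 0 < l ∧ C l - a ∈ P ∧ C l + a ∈ P)

include hPO

lemma PO.constP {c : ℝ} (hc : 0 ≤ c) : (C c : MvPolynomial (Fin (n+1)) ℝ) ∈ P := by
  have := hPO.1 (C (Real.sqrt c))
  rwa [← map_pow, sq, Real.mul_self_sqrt hc] at this

include hproper in
lemma PO.const_nonneg {c : ℝ} (hc : (C c : MvPolynomial (Fin (n+1)) ℝ) ∈ P) : 0 ≤ c := by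
  by_contra h
  push_neg at h
  have h2 : (C (-c⁻¹) : MvPolynomial (Fin (n+1)) ℝ) ∈ P := PO.constP hPO (by
    have := inv_nonpos.mpr h.le; linarith)
  have h3 := hPO.2.2 _ _ hc h2
  rw [← map_mul, show c * -c⁻¹ = -1 by rw [mul_neg, mul_inv_cancel₀ (ne_of_lt h)], map_neg,
    map_one] at h3
  exact hproper h3

/-- the set of upper bounds of `a` relative to `P`. -/
def SS (P : Set (MvPolynomial (Fin (n+1)) ℝ)) (a : MvPolynomial (Fin (n+1)) ℝ) : Set ℝ :=
  {l : ℝ | C l - a ∈ P}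

omit hPO in
include harch in
lemma SS.nonempty (a : MvPolynomial (Fin (n+1)) ℝ) : (SS P a).Nonempty := by
  obtain ⟨l, _, h1, _⟩ := harch a
  exact ⟨l, h1⟩

include hproper harch in
lemma SS.bddBelow (a : MvPolynomial (Fin (n+1)) ℝ) : BddBelow (SS P a) := by
  obtain ⟨m, _, _, h2⟩ := harch a
  refine ⟨-m, fun l hl => ?_⟩
  have := hPO.2.1 _ _ hl h2
  rw [show C l - a + (C m + a) = C (l + m) by rw [map_add]; ring] at this
  have := PO.const_nonneg hPO hproper this
  linarith

lemma SS.upward {a : MvPolynomial (Fin (n+1)) ℝ} {l l' : ℝ} (hl : l ∈ SS P a) (h : l ≤ l') :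
    l' ∈ SS P a := by
  have := hPO.2.1 _ _ hl (PO.constP hPO (c := l' - l) (by linarith))
  rwa [show C l - a + C (l' - l) = C l' - a by rw [map_sub]; ring] at this

/-- the induced state. -/
noncomputable def phi (P : Set (MvPolynomial (Fin (n+1)) ℝ)) (a : MvPolynomial (Fin (n+1)) ℝ) : ℝ :=
  sInf (SS P a)

include hproper harch

lemma phi_le_of_mem {a : MvPolynomial (Fin (n+1)) ℝ} {l : ℝ} (h : l ∈ SS P a) : phi P a ≤ l :=
  csInf_le (SS.bddBelow hPO hproper harch a) h

lemma mem_of_phi_lt {a : MvPolynomial (Fin (n+1)) ℝ} {l : ℝ} (h : phi P a < l) : l ∈ SS P a := by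
  obtain ⟨m, hm, hml⟩ := exists_lt_of_csInf_lt (SS.nonempty harch a) h
  exact SS.upward hPO hm hml.le

lemma notMem_of_lt_phi {a : MvPolynomial (Fin (n+1)) ℝ} {l : ℝ} (h : l < phi P a) :
    l ∉ SS P a := fun hl => absurd (phi_le_of_mem hPO hproper harch hl) (by linarith)

lemma phi_add_le (a b : MvPolynomial (Fin (n+1)) ℝ) : phi P (a + b) ≤ phi P a + phi P b := by
  refine le_of_forall_pos_le_add fun ε hε => ?_
  have h1 := mem_of_phi_lt hPO hproper harch (a := a) (l := phi P a + ε/2) (by linarith)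
  have h2 := mem_of_phi_lt hPO hproper harch (a := b) (l := phi P b + ε/2) (by linarith)
  have h3 := hPO.2.1 _ _ h1 h2
  rw [sub_add_sub_comm, ← map_add] at h3
  have h4 := phi_le_of_mem hPO hproper harch h3
  linarith

lemma phi_nonneg_of_mem {a : MvPolynomial (Fin (n+1)) ℝ} (ha : a ∈ P) : 0 ≤ phi P a := by
  refine le_csInf (SS.nonempty harch a) fun l hl => ?_
  have := hPO.2.1 _ _ hl ha
  rw [sub_add_cancel] at this
  exact PO.const_nonneg hPO hproper this

include htot in
lemma phi_neg (a : MvPolynomial (Fin (n+1)) ℝ) : phi P (-a) = -phi P a := by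
  have hge : -phi P a ≤ phi P (-a) := by
    refine le_csInf (SS.nonempty harch (-a)) fun l hl => ?_
    -- ∀ l ∈ SS(-a) : -phi a ≤ l, i.e. -l ≤ phi a, i.e. -l lower bound? use: ∀ m ∈ SS a, -l ≤ m
    have : -l ≤ phi P a := by
      refine le_csInf (SS.nonempty harch a) fun m hm => ?_
      have := hPO.2.1 _ _ hl hm
      rw [show C l - -a + (C m - a) = C (l + m) by rw [map_add]; ring] at this
      have := PO.const_nonneg hPO hproper this
      linarith
    linarith
  have hle : phi P (-a) ≤ -phi P a := by
    by_contra h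
    push_neg at h
    obtain ⟨l, hl1, hl2⟩ := exists_between (show -phi P (-a) < phi P a by linarith)
    have hnot := notMem_of_lt_phi hPO hproper harch hl2
    rcases htot (C l - a) with hin | hin
    · exact hnot hin
    · have : -l ∈ SS P (-a) := by
        rw [SS, Set.mem_setOf_eq, map_neg, show -C l - -a = -(C l - a) by ring]
        exact hin
      have := phi_le_of_mem hPO hproper harch this
      linarith
  linarith

include htot in
lemma phi_add (a b : MvPolynomial (Fin (n+1)) ℝ) : phi P (a + b) = phi P a + phi P b := by
  have h1 := phi_add_le hPO hproper harch a b
  have h2 := phi_add_le hPO hproper harch (-a) (-b)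
  rw [show -a + -b = -(a+b) by ring, phi_neg hPO hproper htot harch,
    phi_neg hPO hproper htot harch, phi_neg hPO hproper htot harch] at h2
  linarith

lemma phi_const (c : ℝ) : phi P (C c) = c := by
  have h1 : phi P (C c) ≤ c := phi_le_of_mem hPO hproper harch (by
    rw [SS, Set.mem_setOf_eq, sub_self]; simpa using hPO.1 0)
  have h2 : c ≤ phi P (C c) := by
    refine le_csInf (SS.nonempty harch _) fun l hl => ?_
    rw [SS, Set.mem_setOf_eq, ← map_sub] at hl
    have := PO.const_nonneg hPO hproper hl
    linarith
  linarith

lemma phi_smul_le {c : ℝ} (hc : 0 < c) (a : MvPolynomial (Fin (n+1)) ℝ) :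
    phi P (C c * a) ≤ c * phi P a := by
  refine le_of_forall_pos_le_add fun ε hε => ?_
  have h1 := mem_of_phi_lt hPO hproper harch (a := a) (l := phi P a + ε/c) (by
    have : 0 < ε/c := by positivity
    linarith)
  have h2 := hPO.2.2 _ _ (PO.constP hPO hc.le) h1
  rw [show C c * (C (phi P a + ε/c) - a) = C (c * (phi P a + ε/c)) - C c * a by
    rw [map_mul]; ring] at h2
  have := phi_le_of_mem hPO hproper harch h2
  have e : c * (phi P a + ε/c) = c * phi P a + ε := by field_simp
  rw [e] at this
  exact this

lemma phi_smul_pos {c : ℝ} (hc : 0 < c) (a : MvPolynomial (Fin (n+1)) ℝ) :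
    phi P (C c * a) = c * phi P a := by
  have h1 := phi_smul_le hPO hproper harch hc a
  have h2 := phi_smul_le hPO hproper harch (c := c⁻¹) (by positivity) (C c * a)
  rw [← mul_assoc, ← map_mul, inv_mul_cancel₀ hc.ne', map_one, one_mul] at h2
  have h3 := mul_le_mul_of_nonneg_left h2 hc.le
  rw [← mul_assoc, mul_inv_cancel₀ hc.ne', one_mul] at h3
  linarith

include htot in
lemma phi_smul (c : ℝ) (a : MvPolynomial (Fin (n+1)) ℝ) : phi P (C c * a) = c * phi P a := by
  rcases lt_trichotomy c 0 with h | h | h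
  · have := phi_smul_pos hPO hproper harch (c := -c) (by linarith) a
    rw [show C (-c) * a = -(C c * a) by rw [map_neg]; ring,
      phi_neg hPO hproper htot harch] at this
    linarith
  · subst h
    have h0 := phi_const hPO hproper harch 0
    rw [map_zero] at h0
    rw [map_zero, zero_mul, h0, zero_mul]
  · exact phi_smul_pos hPO hproper harch h a

include htot in
lemma phi_sq (a : MvPolynomial (Fin (n+1)) ℝ) : phi P (a ^ 2) = (phi P a) ^ 2 := by
  set α := phi P a with hα
  have hkey : phi P ((a - C α) ^ 2) = 0 := by
    have hge := phi_nonneg_of_mem hPO hproper harch (hPO.1 (a - C α))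
    have hle : ∀ ε : ℝ, 0 < ε → phi P ((a - C α) ^ 2) ≤ ε ^ 2 := by
      intro ε hε
      have h1 : C (α + ε) - a ∈ P := mem_of_phi_lt hPO hproper harch (by linarith)
      have h2 : a - C (α - ε) ∈ P := by
        have hnot := notMem_of_lt_phi hPO hproper harch (a := a) (l := α - ε) (by linarith)
        rcases htot (C (α - ε) - a) with hin | hin
        · exact absurd hin hnot
        · rwa [neg_sub] at hin
      have h3 := hPO.2.2 _ _ h1 h2
      rw [show (C (α + ε) - a) * (a - C (α - ε)) = C (ε^2) - (a - C α)^2 by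
        rw [map_add, map_sub, map_pow]; ring] at h3
      exact phi_le_of_mem hPO hproper harch h3
    refine le_antisymm ?_ hge
    refine le_of_forall_pos_le_add fun δ hδ => ?_
    have := hle (Real.sqrt δ) (Real.sqrt_pos.2 hδ)
    rw [Real.sq_sqrt hδ.le] at this
    linarith
  have e : a ^ 2 = (a - C α) ^ 2 + C (2 * α) * a + C (-(α^2)) := by
    rw [map_mul, map_neg, map_pow, map_ofNat]; ring
  rw [e, phi_add hPO hproper htot harch, phi_add hPO hproper htot harch, hkey,
    phi_smul hPO hproper htot harch, phi_const hPO hproper harch, ← hα]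
  ring

include htot in
lemma phi_mul (a b : MvPolynomial (Fin (n+1)) ℝ) : phi P (a * b) = phi P a * phi P b := by
  have e : (a + b) ^ 2 = a ^ 2 + b ^ 2 + C 2 * (a * b) := by
    rw [map_ofNat]; ring
  have h1 : phi P ((a + b) ^ 2) = (phi P a + phi P b) ^ 2 := by
    rw [phi_sq hPO hproper htot harch, phi_add hPO hproper htot harch]
  have h2 : phi P ((a + b) ^ 2)
      = (phi P a) ^ 2 + (phi P b) ^ 2 + 2 * phi P (a * b) := by
    rw [e, phi_add hPO hproper htot harch, phi_add hPO hproper htot harch,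
      phi_sq hPO hproper htot harch, phi_sq hPO hproper htot harch,
      phi_smul hPO hproper htot harch]
  nlinarith [h1, h2]

include htot in
lemma phi_eq_eval (p : MvPolynomial (Fin (n+1)) ℝ) :
    phi P p = eval (fun i => phi P (X i)) p := by
  induction p using MvPolynomial.induction_on with
  | C c => rw [phi_const hPO hproper harch, eval_C]
  | add p q hp hq => rw [phi_add hPO hproper htot harch, map_add, hp, hq]
  | mul_X p i hp => rw [phi_mul hPO hproper htot harch, map_mul, hp, eval_X]

end Phi

section KeyLemma

variable {n : ℕ}

/-- Putinar's key lemma: if `f·τ₂ = 1 + τ₁` with `τᵢ` in the preordering, then `f`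
itself is in the preordering. -/
lemma key_lemma {f τ₁ τ₂ : MvPolynomial (Fin (n+1)) ℝ} (h1 : τ₁ ∈ Pre n) (h2 : τ₂ ∈ Pre n)
    (heq : f * τ₂ = 1 + τ₁) : f ∈ Pre n := by
  obtain ⟨l, hl, hlσ, -⟩ := bnd_all τ₂
  obtain ⟨μ, hμ, -, hμf⟩ := bnd_all f
  have hinv : (C l : MvPolynomial (Fin (n+1)) ℝ) * C l⁻¹ = 1 := by
    rw [← map_mul, mul_inv_cancel₀ hl.ne', map_one]
  have descent : ∀ t : ℝ, 0 ≤ t → C t + f ∈ Pre n → C (t - l⁻¹) + f ∈ Pre n := by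
    intro t ht hmem
    have hstep : C l * (C (t - l⁻¹) + f) = (C l - τ₂) * (C t + f) + C t * τ₂ + τ₁ := by
      rw [map_sub]
      linear_combination heq - hinv
    have hmem2 : (C l - τ₂) * (C t + f) + C t * τ₂ + τ₁ ∈ Pre n :=
      Pre.add (Pre.add (Pre.mul hlσ hmem) (Pre.mul (Pre.const ht) h2)) h1
    rw [← hstep] at hmem2
    have h3 := Pre.smul (c := l⁻¹) (by positivity) hmem2
    rwa [← mul_assoc, show (C l⁻¹ : MvPolynomial (Fin (n+1)) ℝ) * C l = 1 by
      rw [← map_mul, inv_mul_cancel₀ hl.ne', map_one], one_mul] at h3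
  have main : ∀ k : ℕ, C (μ - k * l⁻¹) + f ∈ Pre n ∨ f ∈ Pre n := by
    intro k
    induction k with
    | zero => left; simpa using hμf
    | succ k ih =>
      rcases ih with h | h
      · by_cases hc : 0 ≤ μ - k * l⁻¹
        · left
          have := descent _ hc h
          rwa [show μ - k * l⁻¹ - l⁻¹ = μ - (k + 1 : ℕ) * l⁻¹ by push_cast; ring] at this
        · right
          have := Pre.add h (Pre.const (c := -(μ - k * l⁻¹)) (by linarith))
          rwa [show C (μ - k * l⁻¹) + f + C (-(μ - k * l⁻¹)) = f by
            rw [map_neg]; ring] at this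
      · right; exact h
  obtain ⟨k, hk⟩ := exists_nat_gt (μ * l)
  rcases main k with h | h
  · have hneg : μ - k * l⁻¹ < 0 := by
      have h1 : μ * l * l⁻¹ < k * l⁻¹ := by
        apply mul_lt_mul_of_pos_right hk
        positivity
      rw [mul_assoc, mul_inv_cancel₀ hl.ne', mul_one] at h1
      linarith
    have := Pre.add h (Pre.const (c := -(μ - k * l⁻¹)) (by linarith))
    rwa [show C (μ - k * l⁻¹) + f + C (-(μ - k * l⁻¹)) = f by rw [map_neg]; ring] at this
  · exact h

end KeyLemma

section PartA

variable {n : ℕ}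

/-- Putinar-type representation on the sphere. -/
theorem sphere_representation (f : MvPolynomial (Fin (n+1)) ℝ)
    (hpos : ∀ x : Fin (n+1) → ℝ, (∑ i, (x i)^2) = 1 → 0 < eval x f) :
    f ∈ Pre n := by
  by_contra hf
  -- the preordering T' = Pre - f * Pre
  set T' : Set (MvPolynomial (Fin (n+1)) ℝ) :=
    {x | ∃ a ∈ Pre n, ∃ b ∈ Pre n, x = a - f * b} with hT'
  have hPreT' : Pre n ⊆ T' := fun a ha => ⟨a, ha, 0, Pre.zero, by ring⟩
  have hT'PO : IsPO T' := by
    refine ⟨fun a => hPreT' (Pre.sq a), ?_, ?_⟩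
    · rintro _ _ ⟨a, ha, b, hb, rfl⟩ ⟨c, hc, d, hd, rfl⟩
      exact ⟨a + c, Pre.add ha hc, b + d, Pre.add hb hd, by ring⟩
    · rintro _ _ ⟨a, ha, b, hb, rfl⟩ ⟨c, hc, d, hd, rfl⟩
      refine ⟨a * c + f^2 * (b * d), Pre.add (Pre.mul ha hc)
        (Pre.mul (Pre.sq f) (Pre.mul hb hd)), a * d + b * c,
        Pre.add (Pre.mul ha hd) (Pre.mul hb hc), by ring⟩
  have hT'proper : (-1 : MvPolynomial (Fin (n+1)) ℝ) ∉ T' := by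
    rintro ⟨a, ha, b, hb, hab⟩
    exact hf (key_lemma ha hb (by linear_combination hab))
  have hnegf : -f ∈ T' := ⟨0, Pre.zero, 1, Pre.one, by ring⟩
  -- Zorn's lemma
  set S : Set (Set (MvPolynomial (Fin (n+1)) ℝ)) :=
    {P | IsPO P ∧ T' ⊆ P ∧ (-1 : MvPolynomial (Fin (n+1)) ℝ) ∉ P} with hS
  have hchain_cond : ∀ c ⊆ S, IsChain (· ⊆ ·) c → c.Nonempty →
      ∃ ub ∈ S, ∀ s ∈ c, s ⊆ ub := by
    intro c hcS hchain hcne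
    refine ⟨⋃₀ c, ⟨⟨?_, ?_, ?_⟩, ?_, ?_⟩, fun s hs => Set.subset_sUnion_of_mem hs⟩
    · intro a
      obtain ⟨Q, hQ⟩ := hcne
      exact Set.mem_sUnion.2 ⟨Q, hQ, (hcS hQ).1.1 a⟩
    · rintro a b ⟨Qa, hQa, haQ⟩ ⟨Qb, hQb, hbQ⟩
      rcases hchain.total hQa hQb with h | h
      · exact ⟨Qb, hQb, (hcS hQb).1.2.1 a b (h haQ) hbQ⟩
      · exact ⟨Qa, hQa, (hcS hQa).1.2.1 a b haQ (h hbQ)⟩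
    · rintro a b ⟨Qa, hQa, haQ⟩ ⟨Qb, hQb, hbQ⟩
      rcases hchain.total hQa hQb with h | h
      · exact ⟨Qb, hQb, (hcS hQb).1.2.2 a b (h haQ) hbQ⟩
      · exact ⟨Qa, hQa, (hcS hQa).1.2.2 a b haQ (h hbQ)⟩
    · obtain ⟨Q, hQ⟩ := hcne
      exact (hcS hQ).2.1.trans (Set.subset_sUnion_of_mem hQ)
    · rintro ⟨Q, hQ, hmem⟩
      exact (hcS hQ).2.2 hmem
  obtain ⟨P, hTP, hPmax⟩ := zorn_subset_nonempty S hchain_cond T' ⟨hT'PO, subset_rfl, hT'proper⟩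
  obtain ⟨⟨hPO, hTsub, hproper⟩, hmax⟩ : (IsPO P ∧ T' ⊆ P ∧ _) ∧ _ := ⟨hPmax.1, hPmax.2⟩
  -- totality of the maximal preordering
  have htot : ∀ a : MvPolynomial (Fin (n+1)) ℝ, a ∈ P ∨ -a ∈ P := by
    intro a
    by_contra hcon
    push_neg at hcon
    obtain ⟨haP, hnaP⟩ := hcon
    have hext : ∀ b : MvPolynomial (Fin (n+1)) ℝ, b ∉ P →
        (-1 : MvPolynomial (Fin (n+1)) ℝ) ∈ {x | ∃ p ∈ P, ∃ q ∈ P, x = p + b * q} := by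
      intro b hbP
      set Q : Set (MvPolynomial (Fin (n+1)) ℝ) := {x | ∃ p ∈ P, ∃ q ∈ P, x = p + b * q} with hQdef
      have hPQ : P ⊆ Q := fun p hp => ⟨p, hp, 0, by simpa using hPO.1 0, by ring⟩
      have hQPO : IsPO Q := by
        refine ⟨fun x => hPQ (hPO.1 x), ?_, ?_⟩
        · rintro _ _ ⟨p, hp, q, hq, rfl⟩ ⟨p', hp', q', hq', rfl⟩
          exact ⟨p + p', hPO.2.1 _ _ hp hp', q + q', hPO.2.1 _ _ hq hq', by ring⟩
        · rintro _ _ ⟨p, hp, q, hq, rfl⟩ ⟨p', hp', q', hq', rfl⟩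
          refine ⟨p * p' + b^2 * (q * q'), hPO.2.1 _ _ (hPO.2.2 _ _ hp hp')
            (hPO.2.2 _ _ (hPO.1 b) (hPO.2.2 _ _ hq hq')), p * q' + q * p',
            hPO.2.1 _ _ (hPO.2.2 _ _ hp hq') (hPO.2.2 _ _ hq hp'), by ring⟩
      have hbQ : b ∈ Q := ⟨0, by simpa using hPO.1 0, 1, by simpa using hPO.1 1, by ring⟩
      by_contra hQproper
      have hQS : Q ∈ S := ⟨hQPO, hTsub.trans hPQ, hQproper⟩
      have := hmax hQS hPQ
      exact hbP (this hbQ)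
    obtain ⟨p₁, hp₁, q₁, hq₁, he₁⟩ := hext a haP
    obtain ⟨p₂, hp₂, q₂, hq₂, he₂⟩ := hext (-a) hnaP
    have hcontra : (-1 : MvPolynomial (Fin (n+1)) ℝ)
        = p₁ + p₂ + p₁ * p₂ + a^2 * (q₁ * q₂) := by
      linear_combination (a * q₂) * he₁ + (1 + p₁) * he₂
    have : (-1 : MvPolynomial (Fin (n+1)) ℝ) ∈ P := by
      rw [hcontra]
      exact hPO.2.1 _ _ (hPO.2.1 _ _ (hPO.2.1 _ _ hp₁ hp₂) (hPO.2.2 _ _ hp₁ hp₂))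
        (hPO.2.2 _ _ (hPO.1 a) (hPO.2.2 _ _ hq₁ hq₂))
    exact hproper this
  -- the Archimedean property for P
  have harch : ∀ a : MvPolynomial (Fin (n+1)) ℝ, ∃ l : ℝ, 0 < l ∧ C l - a ∈ P ∧ C l + a ∈ P := by
    intro a
    obtain ⟨l, hl, h1, h2⟩ := bnd_all a
    exact ⟨l, hl, hTsub (hPreT' h1), hTsub (hPreT' h2)⟩
  -- the state gives a point of the sphere where f ≤ 0
  set u : Fin (n+1) → ℝ := fun i => phi P (X i) with hu
  have hevalf : phi P f = eval u f := phi_eq_eval hPO hproper htot harch f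
  have hsphere : (∑ i, (u i)^2) = 1 := by
    have h1 : phi P (tt n - 1) ≥ 0 :=
      phi_nonneg_of_mem hPO hproper harch (hTsub (hPreT' Pre.t_sub_one))
    have h2 : phi P (1 - tt n) ≥ 0 :=
      phi_nonneg_of_mem hPO hproper harch (hTsub (hPreT' Pre.one_sub_t))
    have e1 : phi P (tt n - 1) = phi P (tt n) - 1 := by
      rw [sub_eq_add_neg, phi_add hPO hproper htot harch, show (-1 : MvPolynomial (Fin (n+1)) ℝ)
        = C (-1) by rw [map_neg, map_one], phi_const hPO hproper harch]
      ring
    have e2 : phi P (1 - tt n) = 1 - phi P (tt n) := by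
      rw [sub_eq_add_neg, phi_add hPO hproper htot harch, show (1 : MvPolynomial (Fin (n+1)) ℝ)
        = C 1 by rw [map_one], phi_const hPO hproper harch,
        phi_neg hPO hproper htot harch]
      ring
    have htt : phi P (tt n) = 1 := by
      rw [e1] at h1; rw [e2] at h2; linarith
    have : phi P (tt n) = ∑ i, (u i)^2 := by
      rw [phi_eq_eval hPO hproper htot harch, eval_tt]
    linarith [this ▸ htt]
  have hfneg : phi P f ≤ 0 := by
    have h1 : phi P (-f) ≥ 0 := phi_nonneg_of_mem hPO hproper harch (hTsub hnegf)
    rw [phi_neg hPO hproper htot harch] at h1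
    linarith
  have := hpos u hsphere
  rw [← hevalf] at this
  linarith

end PartA

section PartB

variable {n : ℕ}

lemma isSOS_double {ι κ : Type*} [Fintype ι] [Fintype κ]
    (g : ι → κ → MvPolynomial (Fin (n+1)) ℝ) : IsSOS (∑ i, ∑ j, (g i j)^2) := by
  have := isSOS_fintype_sum (ι := ι × κ) (fun ij => g ij.1 ij.2)
  rwa [Fintype.sum_prod_type] at this

lemma isSOS_triple {ι κ ρ : Type*} [Fintype ι] [Fintype κ] [Fintype ρ]
    (g : ι → κ → ρ → MvPolynomial (Fin (n+1)) ℝ) : IsSOS (∑ i, ∑ j, ∑ l, (g i j l)^2) := by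
  have := isSOS_fintype_sum (ι := ι × κ × ρ) (fun ij => g ij.1 ij.2.1 ij.2.2)
  rwa [Fintype.sum_prod_type, Fintype.sum_congr _ _
    (fun i => Fintype.sum_prod_type (f := fun jl : κ × ρ => (g i jl.1 jl.2)^2))] at this

set_option maxHeartbeats 1600000 in
/-- Part B : from a sphere representation to a uniform denominator. -/
theorem partB (d : ℕ) (f : MvPolynomial (Fin (n+1)) ℝ) (hf : f.IsHomogeneous (2*d))
    (hfP : f ∈ Pre n) : ∃ N : ℕ, IsSOS ((tt n)^N * f) := by
  classical
  obtain ⟨σp, q, ⟨k, p, hp⟩, heq⟩ := hfP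
  subst hp
  -- notation
  set S : ℕ := ∑ i, (p i).totalDegree with hS
  set M : ℕ := d + S with hM
  set m : ℕ := M + 1 with hm
  set N : ℕ := d + 2*S + 3 with hN
  have hdeg : ∀ i, (p i).totalDegree ≤ S := fun i =>
    Finset.single_le_sum (f := fun i => (p i).totalDegree) (fun _ _ => Nat.zero_le _)
      (Finset.mem_univ i)
  -- the homogenized even and odd parts
  set AA : Fin k → MvPolynomial (Fin (n+1)) ℝ := fun i =>
    ∑ j ∈ Finset.range (m+1), homogeneousComponent (2*j) (p i) * (tt n)^(m - j) with hAA
  set BB : Fin k → MvPolynomial (Fin (n+1)) ℝ := fun i =>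
    ∑ j ∈ Finset.range m, homogeneousComponent (2*j+1) (p i) * (tt n)^(M - j) with hBB
  refine ⟨N, ?_⟩
  have hgoal : (tt n)^N * f
      = (∑ i, ∑ l, (X l * AA i)^2) + (∑ i, ∑ l, ∑ l', ((X l * X l') * BB i)^2) := by
    apply MvPolynomial.funext
    intro x
    by_cases hx : x = 0
    · subst hx
      have h0 : eval (0 : Fin (n+1) → ℝ) (tt n) = 0 := by
        rw [eval_tt]; simp
      simp only [map_add, map_mul, map_pow, map_sum, eval_X, h0]
      rw [zero_pow (by omega : N ≠ 0)]
      simp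
    · -- the scaling argument
      have hs : 0 < ∑ i, (x i)^2 := by
        rcases (Finset.sum_nonneg fun i _ => sq_nonneg (x i)).lt_or_eq with h | h
        · exact h
        · exfalso
          apply hx
          funext i
          have h0 := (Finset.sum_eq_zero_iff_of_nonneg
            (fun i _ => sq_nonneg (x i))).mp h.symm i (Finset.mem_univ i)
          exact pow_eq_zero_iff (two_ne_zero).elim |>.mp h0
      -- scaling set-up
      set s : ℝ := ∑ i, (x i)^2 with hsdef
      set r : ℝ := Real.sqrt s with hrdef
      have hr : 0 < r := Real.sqrt_pos.2 hs
      have hr2 : r^2 = s := Real.sq_sqrt hs.le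
      set u : Fin (n+1) → ℝ := fun i => r⁻¹ * x i with hudef
      have hxu : x = fun i => r * u i := by
        funext i
        rw [hudef]
        simp only
        rw [← mul_assoc, mul_inv_cancel₀ hr.ne', one_mul]
      have hu1 : ∑ i, (u i)^2 = 1 := by
        rw [hudef]
        simp only [mul_pow]
        rw [← Finset.mul_sum, ← hsdef, inv_pow, hr2, inv_mul_cancel₀ hs.ne']
      have hevx : ∀ (g : MvPolynomial (Fin (n+1)) ℝ) (kk : ℕ), g.IsHomogeneous kk →
          eval x g = r^kk * eval u g := by
        intro g kk hg
        rw [hxu]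
        exact eval_homog_smul hg r u
      have hevneg : ∀ (g : MvPolynomial (Fin (n+1)) ℝ) (kk : ℕ), g.IsHomogeneous kk →
          eval (fun l => -u l) g = (-1:ℝ)^kk * eval u g := by
        intro g kk hg
        have h0 := eval_homog_smul hg (-1) u
        simpa [neg_one_mul] using h0
      have hts : eval x (tt n) = s := by rw [eval_tt]
      have htu : eval u (tt n) = 1 := by rw [eval_tt, hu1]
      -- even and odd parts at u
      set aa : Fin k → ℝ := fun i =>
        ∑ j ∈ Finset.range (m+1), eval u (homogeneousComponent (2*j) (p i)) with haa
      set bb : Fin k → ℝ := fun i =>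
        ∑ j ∈ Finset.range m, eval u (homogeneousComponent (2*j+1) (p i)) with hbb
      have hsum_comp : ∀ i, ∑ j ∈ Finset.range (2*m+1), homogeneousComponent j (p i) = p i := by
        intro i
        have h1 : Finset.range ((p i).totalDegree + 1) ⊆ Finset.range (2*m+1) := by
          apply Finset.range_subset_range.2
          have := hdeg i
          omega
        have h2 : ∀ j ∈ Finset.range (2*m+1), j ∉ Finset.range ((p i).totalDegree + 1) →
            homogeneousComponent j (p i) = 0 := by
          intro j _ hj
          rw [Finset.mem_range, not_lt] at hj
          exact homogeneousComponent_eq_zero _ _ (by omega)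
        rw [← Finset.sum_subset h1 h2]
        exact sum_homogeneousComponent (p i)
      have hPsum : ∀ i, aa i + bb i = eval u (p i) := by
        intro i
        simp only [haa, hbb]
        rw [sum_even_odd (fun j => eval u (homogeneousComponent j (p i))) m, ← map_sum,
          hsum_comp i]
      have hQsum : ∀ i, aa i - bb i = eval (fun l => -u l) (p i) := by
        intro i
        have h1 : eval (fun l => -u l) (p i)
            = ∑ j ∈ Finset.range (2*m+1), (-1:ℝ)^j * eval u (homogeneousComponent j (p i)) :=
          calc eval (fun l => -u l) (p i)
              = eval (fun l => -u l)
                  (∑ j ∈ Finset.range (2*m+1), homogeneousComponent j (p i)) := by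
                rw [hsum_comp i]
            _ = ∑ j ∈ Finset.range (2*m+1),
                  eval (fun l => -u l) (homogeneousComponent j (p i)) := by
                rw [map_sum]
            _ = ∑ j ∈ Finset.range (2*m+1),
                  (-1:ℝ)^j * eval u (homogeneousComponent j (p i)) :=
                Finset.sum_congr rfl fun j _ =>
                  hevneg _ j (homogeneousComponent_isHomogeneous j (p i))
        rw [h1, ← sum_even_odd (fun j => (-1:ℝ)^j * eval u (homogeneousComponent j (p i))) m]
        have he : ∀ j : ℕ, (-1:ℝ)^(2*j) = 1 := fun j => by
          rw [pow_mul, neg_one_sq, one_pow]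
        have ho : ∀ j : ℕ, (-1:ℝ)^(2*j+1) = -1 := fun j => by
          rw [pow_add, pow_mul, neg_one_sq, one_pow, pow_one, one_mul]
        simp only [he, ho, one_mul, neg_one_mul]
        rw [Finset.sum_neg_distrib]
        simp only [haa, hbb]
        ring
      -- scaled evaluations
      have hA : ∀ i, eval x (AA i) = r^(2*m) * aa i := by
        intro i
        simp only [hAA, map_sum, map_mul, map_pow]
        rw [Finset.mul_sum]
        refine Finset.sum_congr rfl fun j hj => ?_
        rw [Finset.mem_range] at hj
        rw [hevx _ _ (homogeneousComponent_isHomogeneous (2*j) (p i)), hts, ← hr2, ← pow_mul]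
        rw [show r^(2*j) * eval u (homogeneousComponent (2*j) (p i)) * r^(2*(m-j))
          = (r^(2*j) * r^(2*(m-j))) * eval u (homogeneousComponent (2*j) (p i)) from by ring,
          ← pow_add, show 2*j + 2*(m-j) = 2*m from by omega]
      have hB : ∀ i, eval x (BB i) = r^(2*M+1) * bb i := by
        intro i
        simp only [hBB, map_sum, map_mul, map_pow]
        rw [Finset.mul_sum]
        refine Finset.sum_congr rfl fun j hj => ?_
        rw [Finset.mem_range] at hj
        rw [hevx _ _ (homogeneousComponent_isHomogeneous (2*j+1) (p i)), hts, ← hr2, ← pow_mul]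
        rw [show r^(2*j+1) * eval u (homogeneousComponent (2*j+1) (p i)) * r^(2*(M-j))
          = (r^(2*j+1) * r^(2*(M-j))) * eval u (homogeneousComponent (2*j+1) (p i)) from by ring,
          ← pow_add, show 2*j+1 + 2*(M-j) = 2*M+1 from by omega]
      -- evaluating the representation at u and -u
      have hPu : eval u f = ∑ i, (eval u (p i))^2 := by
        have h0 := congrArg (eval u) heq
        rw [map_add, map_mul, map_sub, map_one, map_sum, htu] at h0
        simp only [map_pow] at h0
        simpa using h0
      have hQu : eval u f = ∑ i, (eval (fun l => -u l) (p i))^2 := by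
        have h0 := congrArg (eval (fun l => -u l)) heq
        have htun : eval (fun l => -u l) (tt n) = 1 := by
          rw [eval_tt]
          simp only [neg_sq]
          exact hu1
        rw [map_add, map_mul, map_sub, map_one, map_sum, htun] at h0
        simp only [map_pow] at h0
        have hfev : eval (fun l => -u l) f = eval u f := by
          rw [hevneg f (2*d) hf, pow_mul, neg_one_sq, one_pow, one_mul]
        rw [hfev] at h0
        simpa using h0
      have hsum2 : (∑ i, (aa i)^2) + (∑ i, (bb i)^2) = eval u f := by
        rw [← Finset.sum_add_distrib]
        have e : ∀ i : Fin k, (aa i)^2 + (bb i)^2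
            = ((eval u (p i))^2 + (eval (fun l => -u l) (p i))^2)/2 := by
          intro i
          rw [← hPsum i, ← hQsum i]
          ring
        rw [Finset.sum_congr rfl fun i _ => e i]
        rw [← Finset.sum_div, Finset.sum_add_distrib, ← hPu, ← hQu]
        ring
      -- putting everything together
      have inner1 : ∀ c : ℝ, (∑ l : Fin (n+1), (x l * c)^2) = s * c^2 := by
        intro c
        simp only [mul_pow]
        rw [← Finset.sum_mul, ← hsdef]
      have inner2 : ∀ c : ℝ, (∑ l : Fin (n+1), ∑ l' : Fin (n+1), ((x l * x l') * c)^2)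
          = s * (s * c^2) := by
        intro c
        have h0 : ∀ l, (∑ l' : Fin (n+1), ((x l * x l') * c)^2) = (x l)^2 * (s * c^2) := by
          intro l
          rw [Finset.sum_congr rfl fun l' _ => show ((x l * x l') * c)^2
            = (x l)^2 * (x l' * c)^2 from by ring, ← Finset.mul_sum, inner1 c]
        rw [Finset.sum_congr rfl fun l _ => h0 l, ← Finset.sum_mul, ← hsdef]
      have e1 : ∀ c : ℝ, s * (r^(2*m) * c)^2 = r^(4*m+2) * c^2 := by
        intro c
        rw [← hr2]
        ring
      have e2 : ∀ c : ℝ, s * (s * ((r^(2*M+1) * c)^2)) = r^(4*m+2) * c^2 := by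
        intro c
        rw [← hr2, hm]
        ring
      simp only [map_add, map_sum, map_mul, map_pow, eval_X]
      rw [hts, hevx f (2*d) hf]
      simp only [hA, hB, inner1, inner2, e1, e2]
      rw [← Finset.mul_sum, ← Finset.mul_sum, ← mul_add, hsum2, ← hr2, ← pow_mul,
        ← mul_assoc, ← pow_add, show 2*N + 2*d = 4*m+2 from by omega]
  rw [hgoal]
  exact IsSOS.add (isSOS_double _) (isSOS_triple _)

end PartB

/-- For `f` homogeneous of even degree and strictly positive off the origin, some power
of `x_0² + ⋯ + x_n²` times `f` is a sum of squares of polynomials. -/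
theorem denominator_theorem (n d : ℕ) (f : MvPolynomial (Fin (n + 1)) ℝ)
    (hf : f.IsHomogeneous (2 * d))
    (hpos : ∀ x : Fin (n + 1) → ℝ, x ≠ 0 → 0 < eval x f) :
    ∃ N : ℕ, IsSOS ((∑ i, (X i : MvPolynomial (Fin (n + 1)) ℝ) ^ 2) ^ N * f) := by
  have hfP : f ∈ Pre n := by
    apply sphere_representation f
    intro x hx
    apply hpos x
    intro h0
    rw [h0] at hx
    simp at hx
  obtain ⟨N, h⟩ := partB d f hf hfP
  exact ⟨N, h⟩
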